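/- arXiv:0803.2601 — 2 statements merged into one kernel-verified Lean document; each statement's English description precedes it below -/
import Mathlib

section
/- Let A, B and T be finite subsets of an abelian group G with |A| ≥ |B| ≥ k ≥ 1 and |A| ≥ |T|, and let t ≥ 1. If r_{A,−B}(x) ≤ k for all x ∈ G \ T, then ∑_{i=1}^{t} |A +_i B| ≥ t·min{ |A||B| / (t + √(t(t−1))), |A|²|B| / (|T|(|B|−k) + k|A|) }, and in particular ∑_{i=1}^{t} |A +_i B| ≥ min{ |A||B|/2, t·|A|²|B| / (|T|(|B|−k) + k|A|) }. -/
open scoped Pointwise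

variable {G : Type*} [AddCommGroup G] [DecidableEq G]

/-- `rep A B g` is the number of representations of `g` as `a + b` with `a ∈ A`, `b ∈ B`. -/
def rep (A B : Finset G) (g : G) : ℕ :=
  ((A ×ˢ B).filter (fun p => p.1 + p.2 = g)).card

/-- `repSum A B i` is the set `A +_i B` of elements having at least `i` representations. -/
def repSum (A B : Finset G) (i : ℕ) : Finset G :=
  (A + B).filter (fun g => i ≤ rep A B g)

lemma sum_rep (A B : Finset G) : ∑ g ∈ A + B, rep A B g = A.card * B.card := by
  rw [← Finset.card_product]
  rw [Finset.card_eq_sum_card_fiberwise (f := fun p : G × G => p.1 + p.2) (t := A + B)]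
  · rfl
  · intro p hp
    simp only [Finset.mem_coe, Finset.mem_product] at hp
    exact Finset.add_mem_add hp.1 hp.2

lemma rep_le (A B : Finset G) (g : G) : rep A B g ≤ B.card := by
  apply Finset.card_le_card_of_injOn (fun p => p.2)
  · intro p hp
    simp only [Finset.mem_coe, rep, Finset.mem_filter, Finset.mem_product] at hp
    exact hp.1.2
  · intro p hp q hq h
    simp only [Finset.mem_coe, rep, Finset.mem_filter, Finset.mem_product] at hp hq
    have : p.1 = q.1 := by
      have h2 := hp.2.trans hq.2.symm
      simp only at h
      rw [h] at h2
      exact add_right_cancel h2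
    exact Prod.ext this h

lemma rep_neg (A B : Finset G) (x : G) :
    rep A (-B) x = ((A ×ˢ B).filter (fun p => p.1 - p.2 = x)).card := by
  apply Finset.card_bij' (fun p _ => (p.1, -p.2)) (fun p _ => (p.1, -p.2))
  · intro p _; simp
  · intro p _; simp
  · intro p hp
    rw [Finset.mem_filter, Finset.mem_product] at hp ⊢
    have hb : -p.2 ∈ B := by
      have := Finset.neg_mem_neg hp.1.2
      simpa using this
    exact ⟨⟨hp.1.1, hb⟩, by rw [sub_neg_eq_add]; exact hp.2⟩
  · intro p hp
    rw [Finset.mem_filter, Finset.mem_product] at hp ⊢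
    exact ⟨⟨hp.1.1, Finset.neg_mem_neg hp.1.2⟩, by rw [← sub_eq_add_neg]; exact hp.2⟩

lemma energy_card (A B : Finset G) :
    (((A ×ˢ B) ×ˢ (A ×ˢ B)).filter (fun z => z.1.1 + z.1.2 = z.2.1 + z.2.2)).card
      = ∑ g ∈ A + B, (rep A B g)^2 := by
  rw [Finset.card_eq_sum_card_fiberwise (f := fun z : (G×G)×(G×G) => z.1.1 + z.1.2)
    (t := A + B)]
  · apply Finset.sum_congr rfl
    intro g _
    have hset : (((A ×ˢ B) ×ˢ (A ×ˢ B)).filter (fun z => z.1.1 + z.1.2 = z.2.1 + z.2.2)).filter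
        (fun z => z.1.1 + z.1.2 = g)
        = ((A ×ˢ B).filter (fun p => p.1 + p.2 = g)) ×ˢ
          ((A ×ˢ B).filter (fun p => p.1 + p.2 = g)) := by
      ext z
      simp only [Finset.mem_filter, Finset.mem_product]
      constructor
      · intro h
        exact ⟨⟨h.1.1.1, h.2⟩, h.1.1.2, h.1.2.symm.trans h.2⟩
      · intro h
        exact ⟨⟨⟨h.1.1, h.2.1⟩, h.1.2.trans h.2.2.symm⟩, h.1.2⟩
    rw [hset, Finset.card_product, rep, sq]
  · intro z hz
    simp only [Finset.mem_coe, Finset.mem_filter, Finset.mem_product] at hz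
    exact Finset.add_mem_add hz.1.1.1 hz.1.1.2

lemma energy_card_sub (A B : Finset G) :
    (((A ×ˢ B) ×ˢ (A ×ˢ B)).filter (fun z => z.1.1 - z.1.2 = z.2.1 - z.2.2)).card
      = ∑ x ∈ A + (-B), (rep A (-B) x)^2 := by
  rw [Finset.card_eq_sum_card_fiberwise (f := fun z : (G×G)×(G×G) => z.1.1 - z.1.2)
    (t := A + (-B))]
  · apply Finset.sum_congr rfl
    intro x _
    have hset : (((A ×ˢ B) ×ˢ (A ×ˢ B)).filter (fun z => z.1.1 - z.1.2 = z.2.1 - z.2.2)).filter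
        (fun z => z.1.1 - z.1.2 = x)
        = ((A ×ˢ B).filter (fun p => p.1 - p.2 = x)) ×ˢ
          ((A ×ˢ B).filter (fun p => p.1 - p.2 = x)) := by
      ext z
      simp only [Finset.mem_filter, Finset.mem_product]
      constructor
      · intro h
        exact ⟨⟨h.1.1.1, h.2⟩, h.1.1.2, h.1.2.symm.trans h.2⟩
      · intro h
        exact ⟨⟨⟨h.1.1, h.2.1⟩, h.1.2.trans h.2.2.symm⟩, h.1.2⟩
    rw [hset, Finset.card_product, rep_neg, sq]
  · intro z hz
    simp only [Finset.mem_coe, Finset.mem_filter, Finset.mem_product] at hz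
    have : z.1.1 - z.1.2 = z.1.1 + (-z.1.2) := sub_eq_add_neg _ _
    simp only [Finset.mem_coe]
    rw [this]
    exact Finset.add_mem_add hz.1.1.1 (Finset.neg_mem_neg hz.1.1.2)

lemma energy_eq (A B : Finset G) :
    ∑ g ∈ A + B, (rep A B g)^2 = ∑ x ∈ A + (-B), (rep A (-B) x)^2 := by
  rw [← energy_card, ← energy_card_sub]
  apply Finset.card_nbij' (fun z => ((z.1.1, z.2.2), (z.2.1, z.1.2)))
    (fun z => ((z.1.1, z.2.2), (z.2.1, z.1.2)))
  · intro z hz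
    simp only [Finset.mem_coe, Finset.mem_filter, Finset.mem_product] at hz ⊢
    refine ⟨⟨⟨hz.1.1.1, hz.1.2.2⟩, hz.1.2.1, hz.1.1.2⟩, ?_⟩
    rw [sub_eq_sub_iff_add_eq_add]
    exact hz.2
  · intro z hz
    simp only [Finset.mem_coe, Finset.mem_filter, Finset.mem_product] at hz ⊢
    refine ⟨⟨⟨hz.1.1.1, hz.1.2.2⟩, hz.1.2.1, hz.1.1.2⟩, ?_⟩
    rw [sub_eq_sub_iff_add_eq_add] at hz
    exact hz.2
  · intro z _; rfl
  · intro z _; rfl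

lemma card_repSum (A B : Finset G) (t : ℕ) :
    ∑ i ∈ Finset.Icc 1 t, (repSum A B i).card = ∑ g ∈ A + B, min (rep A B g) t := by
  have h1 : ∀ i, (repSum A B i).card = ∑ g ∈ A + B, if i ≤ rep A B g then 1 else 0 := by
    intro i
    rw [repSum, Finset.card_filter]
  calc ∑ i ∈ Finset.Icc 1 t, (repSum A B i).card
      = ∑ i ∈ Finset.Icc 1 t, ∑ g ∈ A + B, if i ≤ rep A B g then 1 else 0 := by
        exact Finset.sum_congr rfl fun i _ => h1 i
    _ = ∑ g ∈ A + B, ∑ i ∈ Finset.Icc 1 t, if i ≤ rep A B g then 1 else 0 :=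
        Finset.sum_comm
    _ = ∑ g ∈ A + B, min (rep A B g) t := by
        apply Finset.sum_congr rfl
        intro g _
        rw [← Finset.card_filter]
        have : (Finset.Icc 1 t).filter (fun i => i ≤ rep A B g)
            = Finset.Icc 1 (min (rep A B g) t) := by
          ext i
          simp only [Finset.mem_filter, Finset.mem_Icc]
          omega
        rw [this, Nat.card_Icc]
        omega

lemma energy_bound (A B T : Finset G) (k : ℕ) (hBk : k ≤ B.card)
    (hrep : ∀ x : G, x ∉ T → rep A (-B) x ≤ k) :
    ∑ x ∈ A + (-B), (rep A (-B) x)^2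
      ≤ (B.card - k) * (T.card * B.card) + k * (A.card * B.card) := by
  have hle : ∀ x, rep A (-B) x ≤ B.card := by
    intro x
    have := rep_le A (-B) x
    simpa using this
  rw [← Finset.sum_filter_add_sum_filter_not (A + (-B)) (· ∈ T)]
  have hb1 : ∑ x ∈ (A + (-B)).filter (· ∈ T), (rep A (-B) x)^2
      ≤ B.card * ∑ x ∈ (A + (-B)).filter (· ∈ T), rep A (-B) x := by
    rw [Finset.mul_sum]
    apply Finset.sum_le_sum
    intro x _
    rw [sq]
    exact Nat.mul_le_mul_right _ (hle x)
  have hb2 : ∑ x ∈ (A + (-B)).filter (· ∉ T), (rep A (-B) x)^2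
      ≤ k * ∑ x ∈ (A + (-B)).filter (· ∉ T), rep A (-B) x := by
    rw [Finset.mul_sum]
    apply Finset.sum_le_sum
    intro x hx
    rw [sq]
    exact Nat.mul_le_mul_right _ (hrep x (Finset.mem_filter.mp hx).2)
  set P := ∑ x ∈ (A + (-B)).filter (· ∈ T), rep A (-B) x with hP
  set Q := ∑ x ∈ (A + (-B)).filter (· ∉ T), rep A (-B) x with hQ
  have hPQ : P + Q = A.card * B.card := by
    rw [hP, hQ, Finset.sum_filter_add_sum_filter_not]
    rw [sum_rep]
    simp
  have hPle : P ≤ T.card * B.card := by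
    calc P ≤ ∑ _x ∈ (A + (-B)).filter (· ∈ T), B.card :=
          Finset.sum_le_sum fun x _ => hle x
      _ = ((A + (-B)).filter (· ∈ T)).card * B.card := by rw [Finset.sum_const, smul_eq_mul]
      _ ≤ T.card * B.card := by
          apply Nat.mul_le_mul_right
          apply Finset.card_le_card
          intro x hx
          exact (Finset.mem_filter.mp hx).2
  calc ∑ x ∈ (A + (-B)).filter (· ∈ T), (rep A (-B) x)^2
        + ∑ x ∈ (A + (-B)).filter (· ∉ T), (rep A (-B) x)^2
      ≤ B.card * P + k * Q := Nat.add_le_add hb1 hb2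
    _ = (B.card - k) * P + k * (P + Q) := by
        rw [Nat.mul_add, ← Nat.add_assoc, ← Nat.add_mul, Nat.sub_add_cancel hBk]
    _ ≤ (B.card - k) * (T.card * B.card) + k * (A.card * B.card) := by
        rw [hPQ]
        exact Nat.add_le_add_right (Nat.mul_le_mul_left _ hPle) _

lemma quad_point (tq s y r : ℝ) (hsnn : 0 ≤ s) (hs2 : s^2 = tq*(tq-1)) (ht1 : 1 ≤ tq)
    (hy : tq + s ≤ y) (hr : r = 0 ∨ 1 ≤ r) :
    2*tq*y*r ≤ y^2 * min r tq + tq * r^2 := by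
  have hy0 : (0:ℝ) < y := by nlinarith
  rcases le_total tq r with h | h
  · rw [min_eq_right h]
    nlinarith [sq_nonneg (y - r)]
  · rw [min_eq_left h]
    rcases hr with h0 | h1
    · subst h0; norm_num
    · have hyts : (0:ℝ) ≤ y - tq - s := by linarith
      have hsq2 : s^2 ≤ (y - tq)^2 := by
        nlinarith [mul_nonneg hyts (by linarith : (0:ℝ) ≤ y - tq + s)]
      have h2 : 0 ≤ y^2 - 2*tq*y + tq := by nlinarith
      nlinarith [mul_nonneg (by linarith : (0:ℝ) ≤ r) h2,
        mul_nonneg (mul_nonneg (by linarith : (0:ℝ) ≤ tq) (by linarith : (0:ℝ) ≤ r))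
          (by linarith : (0:ℝ) ≤ r - 1)]

set_option maxHeartbeats 800000 in
theorem lemma_AB_large_from_A_minus_B (A B T : Finset G) (k t : ℕ) (hk : 1 ≤ k)
    (hBk : k ≤ B.card) (hAB : B.card ≤ A.card) (hAT : T.card ≤ A.card) (ht : 1 ≤ t)
    (hrep : ∀ x : G, x ∉ T → rep A (-B) x ≤ k) :
    ((t : ℝ) * min ((A.card * B.card : ℝ) / (t + Real.sqrt (t * (t - 1))))
        ((A.card ^ 2 * B.card : ℝ) / (T.card * (B.card - k) + k * A.card)) ≤
      ∑ i ∈ Finset.Icc 1 t, ((repSum A B i).card : ℝ)) ∧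
    (min ((A.card * B.card : ℝ) / 2)
        ((t : ℝ) * ((A.card ^ 2 * B.card : ℝ) / (T.card * (B.card - k) + k * A.card))) ≤
      ∑ i ∈ Finset.Icc 1 t, ((repSum A B i).card : ℝ)) := by
  have hA1 : 1 ≤ A.card := le_trans hk (le_trans hBk hAB)
  have hB1 : 1 ≤ B.card := le_trans hk hBk
  have htr : (1:ℝ) ≤ (t:ℝ) := by exact_mod_cast ht
  have ht0r : (0:ℝ) ≤ (t:ℝ) := by linarith
  have hAr : (1:ℝ) ≤ (A.card:ℝ) := by exact_mod_cast hA1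
  have hBr : (1:ℝ) ≤ (B.card:ℝ) := by exact_mod_cast hB1
  have hkr : (1:ℝ) ≤ (k:ℝ) := by exact_mod_cast hk
  have hTr : (0:ℝ) ≤ (T.card:ℝ) := by positivity
  have hBkr : (0:ℝ) ≤ (B.card:ℝ) - (k:ℝ) := by
    have : (k:ℝ) ≤ (B.card:ℝ) := by exact_mod_cast hBk
    linarith
  -- rewrite the sum
  have hsum_eq : (∑ i ∈ Finset.Icc 1 t, ((repSum A B i).card : ℝ))
      = ((∑ g ∈ A + B, min (rep A B g) t : ℕ) : ℝ) := by
    rw [← card_repSum]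
    push_cast
    rfl
  rw [hsum_eq]
  set S : ℝ := ((∑ g ∈ A + B, min (rep A B g) t : ℕ) : ℝ) with hSdef
  set c : ℝ := (t:ℝ) + Real.sqrt ((t:ℝ) * ((t:ℝ) - 1)) with hcdef
  set N : ℝ := (A.card:ℝ) * (B.card:ℝ) with hNdef
  set den : ℝ := (T.card:ℝ) * ((B.card:ℝ) - (k:ℝ)) + (k:ℝ) * (A.card:ℝ) with hdendef
  have hsqnn : (0:ℝ) ≤ Real.sqrt ((t:ℝ) * ((t:ℝ) - 1)) := Real.sqrt_nonneg _
  have hs2 : Real.sqrt ((t:ℝ) * ((t:ℝ) - 1)) ^ 2 = (t:ℝ) * ((t:ℝ) - 1) :=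
    Real.sq_sqrt (by nlinarith)
  have hc1 : (1:ℝ) ≤ c := by rw [hcdef]; linarith
  have hc0 : (0:ℝ) < c := by linarith
  have hc2t : c ≤ 2 * (t:ℝ) := by
    rw [hcdef]
    have h1 : Real.sqrt ((t:ℝ) * ((t:ℝ) - 1)) ≤ Real.sqrt ((t:ℝ)^2) :=
      Real.sqrt_le_sqrt (by nlinarith)
    rw [Real.sqrt_sq ht0r] at h1
    linarith
  have hN0 : (0:ℝ) < N := by rw [hNdef]; nlinarith
  have hden0 : (0:ℝ) < den := by rw [hdendef]; nlinarith [mul_nonneg hTr hBkr]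
  have hBpos : (0:ℝ) < (B.card:ℝ) := by linarith
  set E0 : ℝ := (B.card:ℝ) * den with hE0def
  have hE0pos : (0:ℝ) < E0 := by rw [hE0def]; positivity
  -- sum of representations
  have hNsum : ∑ g ∈ A + B, (rep A B g : ℝ) = N := by
    rw [hNdef]
    exact_mod_cast congrArg (Nat.cast (R := ℝ)) (sum_rep A B)
  -- energy bound
  have hEr : ∑ g ∈ A + B, ((rep A B g : ℝ))^2 ≤ E0 := by
    have hEn : (∑ g ∈ A + B, (rep A B g)^2)
        ≤ (B.card - k) * (T.card * B.card) + k * (A.card * B.card) :=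
      (energy_eq A B) ▸ energy_bound A B T k hBk hrep
    have h1 : ((∑ g ∈ A + B, (rep A B g)^2 : ℕ) : ℝ)
        ≤ (((B.card - k) * (T.card * B.card) + k * (A.card * B.card) : ℕ) : ℝ) :=
      Nat.cast_le.mpr hEn
    push_cast [Nat.cast_sub hBk] at h1
    calc ∑ g ∈ A + B, ((rep A B g : ℝ))^2
        ≤ ((B.card:ℝ) - k) * (T.card * B.card) + k * (A.card * B.card) := h1
      _ = E0 := by rw [hE0def, hdendef]; ring
  -- the key inequality for any y ≥ c
  have key : ∀ y : ℝ, c ≤ y → 2 * t * y * N ≤ y^2 * S + t * E0 := by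
    intro y hy
    have hy0 : (0:ℝ) < y := lt_of_lt_of_le hc0 hy
    have hpoint : ∀ g ∈ A + B, 2 * t * y * (rep A B g : ℝ)
        ≤ y^2 * ((min (rep A B g) t : ℕ) : ℝ) + t * ((rep A B g : ℝ))^2 := by
      intro g _
      have hcast : ((min (rep A B g) t : ℕ) : ℝ) = min ((rep A B g : ℝ)) ((t:ℝ)) := by
        push_cast
        rfl
      rw [hcast]
      apply quad_point (t:ℝ) (Real.sqrt ((t:ℝ) * ((t:ℝ) - 1))) y ((rep A B g : ℝ))
        hsqnn hs2 htr (by rw [hcdef] at hy; exact hy)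
      rcases Nat.eq_zero_or_pos (rep A B g) with h0 | h0
      · left; exact_mod_cast h0
      · right; exact_mod_cast h0
    have hsum := Finset.sum_le_sum hpoint
    have hL : ∑ g ∈ A + B, 2 * t * y * (rep A B g : ℝ) = 2 * t * y * N := by
      rw [← Finset.mul_sum, hNsum]
    have hR : ∑ g ∈ A + B, (y^2 * ((min (rep A B g) t : ℕ) : ℝ) + t * ((rep A B g : ℝ))^2)
        = y^2 * S + t * ∑ g ∈ A + B, ((rep A B g : ℝ))^2 := by
      rw [Finset.sum_add_distrib, ← Finset.mul_sum, ← Finset.mul_sum, hSdef]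
      push_cast
      ring
    rw [hL, hR] at hsum
    nlinarith [mul_le_mul_of_nonneg_left hEr ht0r]
  -- main case analysis
  have hcase : (t:ℝ) * min (N / c) ((A.card:ℝ)^2 * (B.card:ℝ) / den) ≤ S := by
    rcases le_total E0 (c * N) with hE0c | hE0c
    · -- use y = c
      have hkey := key c le_rfl
      have hS : t * N / c ≤ S := by
        rw [div_le_iff₀ hc0]
        have h3 : c * ((t:ℝ) * N) ≤ c * (S * c) := by
          nlinarith [mul_le_mul_of_nonneg_left hE0c ht0r]
        nlinarith [le_of_mul_le_mul_left h3 hc0]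
      calc (t:ℝ) * min (N / c) ((A.card:ℝ)^2 * (B.card:ℝ) / den)
          ≤ t * (N / c) := mul_le_mul_of_nonneg_left (min_le_left _ _) ht0r
        _ = t * N / c := by ring
        _ ≤ S := hS
    · -- use y = E0 / N
      have hyc : c ≤ E0 / N := (le_div_iff₀ hN0).mpr (by linarith)
      have hkey := key _ hyc
      have e1 : 2 * (t:ℝ) * (E0 / N) * N = 2 * t * E0 := by field_simp
      have e2 : (E0 / N)^2 * S = E0^2 * S / N^2 := by rw [div_pow]; ring
      rw [e1, e2] at hkey
      have h3 : (t:ℝ) * E0 ≤ E0^2 * S / N^2 := by linarith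
      rw [le_div_iff₀ (by positivity : (0:ℝ) < N^2)] at h3
      have hStep : (t:ℝ) * N^2 ≤ S * E0 := by
        have h4 : E0 * ((t:ℝ) * N^2) ≤ E0 * (S * E0) := by nlinarith
        exact le_of_mul_le_mul_left h4 hE0pos
      have hX2 : (t:ℝ) * ((A.card:ℝ)^2 * (B.card:ℝ) / den) ≤ S := by
        rw [← mul_div_assoc, div_le_iff₀ hden0]
        have hStep' : (t:ℝ) * ((A.card:ℝ) * (B.card:ℝ))^2 ≤ S * ((B.card:ℝ) * den) := by
          rw [← hNdef, ← hE0def]; exact hStep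
        have h6 : (B.card:ℝ) * ((t:ℝ) * ((A.card:ℝ)^2 * (B.card:ℝ)))
            ≤ (B.card:ℝ) * (S * den) := by nlinarith [hStep']
        exact le_of_mul_le_mul_left h6 hBpos
      calc (t:ℝ) * min (N / c) ((A.card:ℝ)^2 * (B.card:ℝ) / den)
          ≤ t * ((A.card:ℝ)^2 * (B.card:ℝ) / den) :=
            mul_le_mul_of_nonneg_left (min_le_right _ _) ht0r
        _ ≤ S := hX2
  constructor
  · exact hcase
  · rcases le_total (N / c) ((A.card:ℝ)^2 * (B.card:ℝ) / den) with h | h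
    · rw [min_eq_left h] at hcase
      have hhalf : N / 2 ≤ (t:ℝ) * (N / c) := by
        rw [mul_div_assoc', div_le_div_iff₀ (by norm_num : (0:ℝ) < 2) hc0]
        calc N * c = c * N := mul_comm _ _
          _ ≤ 2 * (t:ℝ) * N := mul_le_mul_of_nonneg_right hc2t hN0.le
          _ = (t:ℝ) * N * 2 := by ring
      exact le_trans (le_trans (min_le_left _ _) hhalf) hcase
    · rw [min_eq_right h] at hcase
      exact le_trans (min_le_right _ _) hcase
end

section
/- Let G be an abelian group, let A, B ⊆ G be finite and nonempty, and let k ≥ 1. If |A + B| ≤ |A| + |B| − k, then r_{A,B}(x) ≥ k for all x ∈ A + B. -/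
open scoped Pointwise

variable {G : Type*} [AddCommGroup G] [DecidableEq G]

lemma mem_vadd_iff (e b : G) (A : Finset G) : b ∈ e +ᵥ A ↔ -e + b ∈ A := by
  simp [Finset.mem_vadd_finset]
  constructor
  · rintro ⟨y, hy, rfl⟩; simpa
  · intro h; exact ⟨-e + b, h, by abel⟩

lemma rep_eq (A B : Finset G) (x : G) :
    rep A B x = (B.filter (fun b => x - b ∈ A)).card := by
  unfold rep
  apply Finset.card_bij' (fun p _ => p.2) (fun b _ => (x - b, b))
  · rintro ⟨a, b⟩ hp
    simp only [Finset.mem_filter, Finset.mem_product] at hp ⊢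
    obtain ⟨⟨ha, hb⟩, hs⟩ := hp
    exact ⟨hb, by rw [← hs]; simpa using ha⟩
  · intro b hb
    simp only [Finset.mem_filter] at hb
    simp only [Finset.mem_filter, Finset.mem_product]
    exact ⟨⟨hb.2, hb.1⟩, by abel⟩
  · rintro ⟨a, b⟩ hp
    simp only [Finset.mem_filter, Finset.mem_product] at hp
    have : x - b = a := by rw [← hp.2]; abel
    simp [this]
  · intro b _; rfl

lemma rep_transform_le (A B : Finset G) (e x : G) :
    rep (A ∪ (e +ᵥ B)) (B ∩ ((-e) +ᵥ A)) x ≤ rep A B x := by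
  rw [rep_eq, rep_eq]
  apply Finset.card_le_card_of_injOn (fun b => if x - b ∈ A then b else x - b - e)
  · intro b hb
    simp only [Finset.mem_coe, Finset.mem_filter, Finset.mem_inter, Finset.mem_union] at hb
    obtain ⟨⟨hbB, hbA⟩, hxb⟩ := hb
    rw [mem_vadd_iff] at hbA
    rw [neg_neg] at hbA
    by_cases h : x - b ∈ A
    · beta_reduce; rw [if_pos h, Finset.mem_coe, Finset.mem_filter]; exact ⟨hbB, h⟩
    · beta_reduce; rw [if_neg h, Finset.mem_coe, Finset.mem_filter]
      rcases hxb with h' | h'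
      · exact absurd h' h
      · rw [mem_vadd_iff] at h'
        constructor
        · have : -e + (x - b) = x - b - e := by abel
          rwa [this] at h'
        · have : x - (x - b - e) = e + b := by abel
          rw [this]; exact hbA
  · intro b1 h1 b2 h2 heq
    simp only [Finset.mem_coe, Finset.mem_filter, Finset.mem_inter] at h1 h2
    obtain ⟨⟨hb1B, h1A⟩, _⟩ := h1
    obtain ⟨⟨hb2B, h2A⟩, _⟩ := h2
    rw [mem_vadd_iff, neg_neg] at h1A h2A
    by_cases c1 : x - b1 ∈ A <;> by_cases c2 : x - b2 ∈ A <;>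
      simp only [c1, c2, if_true, if_false] at heq
    · exact heq
    · exfalso; apply c2; rw [show x - b2 = e + b1 by rw [heq]; abel]; exact h1A
    · exfalso; apply c1; rw [show x - b1 = e + b2 by rw [← heq]; abel]; exact h2A
    · exact sub_right_inj.mp (sub_left_inj.mp heq)

theorem key : ∀ n (A B : Finset G) (x : G), B.card = n → A.Nonempty →
    x ∈ A + B → A.card + B.card ≤ (A + B).card + rep A B x := by
  intro n
  induction n using Nat.strong_induction_on with
  | _ n ih =>
    intro A B x hn hA hx
    obtain ⟨a0, ha0, b0, hb0, hab0⟩ := Finset.mem_add.mp hx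
    by_cases hcase : A + B ⊆ A + {b0}
    · -- every b ∈ B gives a representation
      have hall : ∀ b ∈ B, x - b ∈ A := by
        intro b hb
        have hsub : A + {b} ⊆ A + {b0} :=
          (Finset.add_subset_add_left (Finset.singleton_subset_iff.mpr hb)).trans hcase
        have hc1 : (A + {b}).card = A.card := Finset.card_add_singleton A b
        have hc2 : (A + {b0}).card = A.card := Finset.card_add_singleton A b0
        have heq : A + {b} = A + {b0} :=
          Finset.eq_of_subset_of_card_le hsub (by omega)
        have hxb : x ∈ A + {b} := heq ▸ (hcase hx)
        rw [Finset.mem_add] at hxb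
        obtain ⟨a, ha, c, hc, hax⟩ := hxb
        rw [Finset.mem_singleton] at hc
        subst hc
        rwa [show x - c = a by rw [← hax]; abel]
      have hrep : rep A B x = B.card := by
        rw [rep_eq]
        congr 1
        exact Finset.filter_true_of_mem hall
      have hAle : A.card ≤ (A + B).card := by
        calc A.card = (A + {b0}).card := (Finset.card_add_singleton A b0).symm
          _ ≤ (A + B).card := Finset.card_le_card
              (Finset.add_subset_add_left (Finset.singleton_subset_iff.mpr hb0))
      omega
    · -- Dyson e-transform
      rw [Finset.not_subset] at hcase
      obtain ⟨y, hy, hy'⟩ := hcase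
      obtain ⟨a1, ha1, b1, hb1, hab1⟩ := Finset.mem_add.mp hy
      set e := a1 - b0 with he
      set A' := A ∪ (e +ᵥ B) with hA'
      set B' := B ∩ ((-e) +ᵥ A) with hB'
      have hb1' : b1 ∉ B' := by
        intro h
        rw [hB', Finset.mem_inter, mem_vadd_iff, neg_neg] at h
        apply hy'
        have hm : (e + b1) + b0 ∈ A + {b0} :=
          Finset.add_mem_add h.2 (Finset.mem_singleton_self b0)
        rwa [show (e + b1) + b0 = y by rw [he, ← hab1]; abel] at hm
      have hb0' : b0 ∈ B' := by
        rw [hB', Finset.mem_inter, mem_vadd_iff, neg_neg]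
        exact ⟨hb0, by rwa [show e + b0 = a1 by rw [he]; abel]⟩
      have hcardlt : B'.card < B.card :=
        Finset.card_lt_card ⟨Finset.inter_subset_left, fun h => hb1' (h hb1)⟩
      have hsubset := Finset.addDysonETransform.subset e (A, B)
      have hcards := Finset.addDysonETransform.card e (A, B)
      simp only [Finset.addDysonETransform] at hsubset hcards
      have hx' : x ∈ A' + B' :=
        hab0 ▸ Finset.add_mem_add (Finset.mem_union_left _ ha0) hb0'
      have hih := ih B'.card (hn ▸ hcardlt) A' B' x rfl
        (hA.mono Finset.subset_union_left) hx'
      have hrle : rep A' B' x ≤ rep A B x := rep_transform_le A B e x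
      have hcle : (A' + B').card ≤ (A + B).card := Finset.card_le_card hsubset
      have hcards' : A'.card + B'.card = A.card + B.card := hcards
      omega

theorem prop_mult_result_i (A B : Finset G) (hA : A.Nonempty) (hB : B.Nonempty) (k : ℕ)
    (hk : 1 ≤ k) (hcard : ((A + B).card : ℤ) ≤ (A.card : ℤ) + B.card - k) :
    ∀ x ∈ A + B, k ≤ rep A B x := by
  intro x hx
  have := key B.card A B x rfl hA hx
  omega
end
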